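/- Extremality theorem (upper bound): any hierarchical clustering method H satisfying the Axioms of Value and Transformation produces ultrametrics bounded above by the reciprocal ultrametric: u_X(x,x') ≤ u^R_X(x,x') for all networks (X, A_X) and all x, x' ∈ X. -/
import Mathlib


/-- Maximum dissimilarity over consecutive links of a chain (list of nodes). -/
def listCost {X : Type*} (A : X → X → ℝ) (l : List X) : ℝ :=
  (l.zip l.tail).foldr (fun p r => max (A p.1 p.2) r) 0

/-- Minimum over chains from `x` to `x'` of the maximum link cost. -/
noncomputable def minChainCost {X : Type*} (A : X → X → ℝ) (x x' : X) : ℝ :=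
  sInf {c : ℝ | ∃ l : List X, l.head? = some x ∧ l.getLast? = some x' ∧ listCost A l = c}

/-- Symmetrized dissimilarity Ā. -/
def symDis {X : Type*} (A : X → X → ℝ) (x x' : X) : ℝ := max (A x x') (A x' x)

/-- Reciprocal ultrametric. -/
noncomputable def uR {X : Type*} (A : X → X → ℝ) (x x' : X) : ℝ := minChainCost (symDis A) x x'

/-- Nonreciprocal ultrametric. -/
noncomputable def uNR {X : Type*} (A : X → X → ℝ) (x x' : X) : ℝ :=
  max (minChainCost A x x') (minChainCost A x' x)

/-- A (finite, asymmetric) network dissimilarity: nonnegative, vanishing exactly on the diagonal. -/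
def IsNetwork {X : Type*} (A : X → X → ℝ) : Prop :=
  (∀ x x', 0 ≤ A x x') ∧ (∀ x x', A x x' = 0 ↔ x = x')

/-- Ultrametric: nonnegative, symmetric, identity of indiscernibles, strong triangle inequality. -/
def IsUltra {X : Type*} (u : X → X → ℝ) : Prop :=
  (∀ x x', 0 ≤ u x x') ∧ (∀ x x', u x x' = u x' x) ∧
  (∀ x x', u x x' = 0 ↔ x = x') ∧
  (∀ x x' x'', u x x' ≤ max (u x x'') (u x'' x'))

lemma listCost_nonneg {X : Type*} (A : X → X → ℝ) (l : List X) (hA : ∀ x x', 0 ≤ A x x') :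
    0 ≤ listCost A l := by
  induction l with
  | nil => simp [listCost]
  | cons a t ih =>
    cases t with
    | nil => simp [listCost]
    | cons b t' =>
      have h : listCost A (a :: b :: t') = max (A a b) (listCost A (b :: t')) := rfl
      rw [h]
      exact le_max_of_le_right ih

theorem extremal_upper_bound
    (H : ∀ (X : Type) [Fintype X], (X → X → ℝ) → (X → X → ℝ))
    (hUltra : ∀ (X : Type) [Fintype X] (A : X → X → ℝ), IsNetwork A → IsUltra (H X A))
    (hValue : ∀ (X : Type) [Fintype X] (A : X → X → ℝ), IsNetwork A →
      ∀ p q : X, p ≠ q → (∀ x : X, x = p ∨ x = q) →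
        H X A p q = max (A p q) (A q p))
    (hTransf : ∀ (X Y : Type) [Fintype X] [Fintype Y]
        (A_X : X → X → ℝ) (A_Y : Y → Y → ℝ), IsNetwork A_X → IsNetwork A_Y →
      ∀ φ : X → Y, (∀ x x' : X, A_Y (φ x) (φ x') ≤ A_X x x') →
        ∀ x x' : X, H Y A_Y (φ x) (φ x') ≤ H X A_X x x') :
    ∀ (X : Type) [Fintype X] (A : X → X → ℝ), IsNetwork A →
      ∀ x x' : X, H X A x x' ≤ uR A x x' := by
  intro X _ A hA x x'
  have hsymnn : ∀ a b : X, 0 ≤ symDis A a b := fun a b => le_max_of_le_left (hA.1 a b)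
  -- Link lemma: H is bounded by symmetrized dissimilarity on each pair.
  have link : ∀ a b : X, H X A a b ≤ symDis A a b := by
    intro a b
    by_cases hab : a = b
    · subst hab
      have h0 : H X A a a = 0 := ((hUltra X A hA).2.2.1 a a).mpr rfl
      rw [h0]; exact hsymnn a a
    · set AZ : Bool → Bool → ℝ :=
        fun z z' => if z = z' then 0 else if z then A b a else A a b with hAZ
      have hba : b ≠ a := fun h => hab h.symm
      have hNZ : IsNetwork AZ := by
        constructor
        · intro z z'
          by_cases h : z = z'
          · simp [AZ, h]
          · simp only [AZ, if_neg h]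
            cases z
            · simpa using hA.1 a b
            · simpa using hA.1 b a
        · intro z z'
          by_cases h : z = z'
          · simp [AZ, h]
          · simp only [AZ, if_neg h]
            cases z
            · simp only [if_neg Bool.false_ne_true]
              constructor
              · intro h0; exact absurd ((hA.2 a b).mp h0) hab
              · intro h0; exact absurd h0 h
            · simp only [if_pos rfl]
              constructor
              · intro h0; exact absurd ((hA.2 b a).mp h0) hba
              · intro h0; exact absurd h0 h
      set φ : Bool → X := fun z => if z then b else a with hφ
      have hmono : ∀ z z' : Bool, A (φ z) (φ z') ≤ AZ z z' := by
        intro z z'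
        cases z <;> cases z' <;>
          simp [AZ, φ, (hA.2 a a).mpr rfl, (hA.2 b b).mpr rfl]
      have h1 : H X A a b = H X A (φ false) (φ true) := by simp [φ]
      have h2 := hTransf Bool X AZ A hNZ hA φ hmono false true
      have h3 : H Bool AZ false true = max (AZ false true) (AZ true false) :=
        hValue Bool AZ hNZ false true (by simp) (fun z => by cases z <;> simp)
      have h4 : max (AZ false true) (AZ true false) = symDis A a b := by
        simp [AZ, symDis]
      rw [h1]
      calc H X A (φ false) (φ true) ≤ H Bool AZ false true := h2
        _ = symDis A a b := by rw [h3, h4]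
  -- Chain lemma
  have chain : ∀ (l : List X) (a b : X), l.head? = some a → l.getLast? = some b →
      H X A a b ≤ listCost (symDis A) l := by
    intro l
    induction l with
    | nil => intro a b h _; simp at h
    | cons c t ih =>
      intro a b h1 h2
      have hac : a = c := by simpa using h1.symm
      subst hac
      cases t with
      | nil =>
        have hbc : b = a := by simpa using h2.symm
        subst hbc
        have h0 : H X A b b = 0 := ((hUltra X A hA).2.2.1 b b).mpr rfl
        rw [h0]
        exact listCost_nonneg _ _ hsymnn
      | cons d t' =>
        have h2' : (d :: t').getLast? = some b := by
          simpa [List.getLast?_cons_cons] using h2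
        have hcost : listCost (symDis A) (a :: d :: t')
            = max (symDis A a d) (listCost (symDis A) (d :: t')) := rfl
        rw [hcost]
        have htri := (hUltra X A hA).2.2.2 a b d
        exact le_trans htri (max_le_max (link a d) (ih d b rfl h2'))
  -- Conclude via le_csInf
  apply le_csInf
  · exact ⟨listCost (symDis A) [x, x'], [x, x'], rfl, by simp, rfl⟩
  · rintro c ⟨l, h1, h2, rfl⟩
    exact chain l x x' h1 h2
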